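/- Let Γ be a connected simple (undirected, unweighted, loopless) graph on n vertices with combinatorial Laplacian L = D − A, and let 𝐆 denote the Moore–Penrose pseudoinverse of L. Then for all vertices u, v: 𝐆(u,v) = (1/(n²τ)) · ( Σ_{T₁∪T₂ ∈ 𝔽₂, u,v ∈ T₁} |T₂|² − Σ_{T₁∪T₂ ∈ 𝔽₂, u ∈ T₁, v ∈ T₂} |T₁|·|T₂| ), where τ is the number of spanning trees of Γ and 𝔽₂ is the set of (unrooted) spanning 2-forests of Γ, with |Tᵢ| the number of vertices of component Tᵢ. -/

import Mathlib

set_option linter.unusedSectionVars false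
set_option linter.unusedVariables false
set_option maxHeartbeats 1000000


open scoped Classical
open Finset Matrix SimpleGraph

namespace Paper

variable {V : Type*} [Fintype V] [DecidableEq V]

/-- Out-degree of `u` in the weighted digraph with weight function `ω`. -/
noncomputable def deg (ω : V → V → ℝ) (u : V) : ℝ := ∑ v, ω u v

/-- A weighted digraph is strongly connected if every vertex can reach every other
vertex along edges of positive weight. -/
def StronglyConnected (ω : V → V → ℝ) : Prop :=
  ∀ u v : V, Relation.ReflTransGen (fun a b => 0 < ω a b) u v

/-- The combinatorial Laplacian `L = D - A` of a weighted digraph. -/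
noncomputable def lap (ω : V → V → ℝ) : Matrix V V ℝ :=
  Matrix.of fun u v => (if u = v then deg ω u else 0) - ω u v

/-- The transition probability matrix `P = D⁻¹ A` of the random walk. -/
noncomputable def trans (ω : V → V → ℝ) : Matrix V V ℝ :=
  Matrix.of fun u v => ω u v / deg ω u

/-- `G` is the Moore–Penrose pseudoinverse of `M` (four Penrose conditions). -/
def IsMoorePenrose (M G : Matrix V V ℝ) : Prop :=
  M * G * M = M ∧ G * M * G = G ∧ (M * G)ᵀ = M * G ∧ (G * M)ᵀ = G * M

/-- `v` reaches `r` under iteration of the parent function `f`. -/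
def Reaches (f : V → V) (v r : V) : Prop := ∃ k : ℕ, f^[k] v = r

/-- `f` encodes a spanning in-tree of the weighted digraph `ω` rooted at `r`:
every non-root vertex has its unique out-edge `(v, f v)` an edge of the digraph,
the root is a fixed point, and every vertex reaches the root. -/
def IsInTree (ω : V → V → ℝ) (r : V) (f : V → V) : Prop :=
  f r = r ∧ (∀ v, v ≠ r → 0 < ω v (f v)) ∧ ∀ v, Reaches f v r

/-- The weight of the spanning in-tree encoded by `f` with root `r`. -/
noncomputable def treeWeight (ω : V → V → ℝ) (r : V) (f : V → V) : ℝ :=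
  ∏ v ∈ Finset.univ.erase r, ω v (f v)

/-- `τ_r`: total weight of spanning in-trees rooted at `r`. -/
noncomputable def tau (ω : V → V → ℝ) (r : V) : ℝ :=
  ∑ f ∈ Finset.univ.filter (fun f : V → V => IsInTree ω r f), treeWeight ω r f

/-- `f` encodes a rooted spanning 2-forest with (distinct) roots `r₁`, `r₂`. -/
def IsForest2 (ω : V → V → ℝ) (r₁ r₂ : V) (f : V → V) : Prop :=
  r₁ ≠ r₂ ∧ f r₁ = r₁ ∧ f r₂ = r₂ ∧ (∀ v, v ≠ r₁ → v ≠ r₂ → 0 < ω v (f v)) ∧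
    ∀ v, Reaches f v r₁ ∨ Reaches f v r₂

/-- The weight of the rooted spanning 2-forest encoded by `f` with roots `r₁`, `r₂`. -/
noncomputable def forestWeight (ω : V → V → ℝ) (r₁ r₂ : V) (f : V → V) : ℝ :=
  ∏ v ∈ (Finset.univ.erase r₁).erase r₂, ω v (f v)

/-- The component of the root `b`: vertices reaching `b` under `f`. -/
noncomputable def comp (f : V → V) (b : V) : Finset V :=
  Finset.univ.filter (fun z => Reaches f z b)

/-! ### Undirected weighted graphs, edges as unordered pairs -/

/-- Weighted degree in an undirected weighted graph given by `ωs : Sym2 V → ℝ`. -/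
noncomputable def degS (ωs : Sym2 V → ℝ) (u : V) : ℝ := ∑ v, ωs s(u, v)

/-- The volume of an undirected weighted graph. -/
noncomputable def volS (ωs : Sym2 V → ℝ) : ℝ := ∑ u, degS ωs u

/-- Connectivity of an undirected weighted graph. -/
def ConnectedW (ωs : Sym2 V → ℝ) : Prop :=
  ∀ u v : V, Relation.ReflTransGen (fun a b => 0 < ωs s(a, b)) u v

/-- An edge set `E` is a spanning tree of the weighted undirected graph `ωs`. -/
def IsWTree (ωs : Sym2 V → ℝ) (E : Finset (Sym2 V)) : Prop :=
  (∀ e ∈ E, 0 < ωs e) ∧ (SimpleGraph.fromEdgeSet (E : Set (Sym2 V))).IsAcyclic ∧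
    (SimpleGraph.fromEdgeSet (E : Set (Sym2 V))).Connected

/-- An edge set `E` is a spanning 2-forest of the weighted undirected graph `ωs`
(acyclic, with exactly two connected components). -/
def IsWTwoForest (ωs : Sym2 V → ℝ) (E : Finset (Sym2 V)) : Prop :=
  (∀ e ∈ E, 0 < ωs e) ∧ (SimpleGraph.fromEdgeSet (E : Set (Sym2 V))).IsAcyclic ∧
    Nat.card (SimpleGraph.fromEdgeSet (E : Set (Sym2 V))).ConnectedComponent = 2

/-- The weight of a subgraph given by an edge set. -/
noncomputable def wgt (ωs : Sym2 V → ℝ) (E : Finset (Sym2 V)) : ℝ := ∏ e ∈ E, ωs e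

/-- Total weight of spanning trees of the weighted undirected graph `ωs`. -/
noncomputable def tauW (ωs : Sym2 V → ℝ) : ℝ :=
  ∑ E ∈ Finset.univ.filter (fun E : Finset (Sym2 V) => IsWTree ωs E), wgt ωs E

/-- The combinatorial Laplacian of a weighted undirected graph. -/
noncomputable def lapW (ωs : Sym2 V → ℝ) : Matrix V V ℝ :=
  Matrix.of fun u v => (if u = v then degS ωs u else 0) - ωs s(u, v)

/-! ### Simple graphs -/

/-- An edge set `E` is a spanning tree of the simple graph `G`. -/
def IsSTree (G : SimpleGraph V) (E : Finset (Sym2 V)) : Prop :=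
  (E : Set (Sym2 V)) ⊆ G.edgeSet ∧ (SimpleGraph.fromEdgeSet (E : Set (Sym2 V))).IsAcyclic ∧
    (SimpleGraph.fromEdgeSet (E : Set (Sym2 V))).Connected

/-- An edge set `E` is a spanning 2-forest of the simple graph `G`. -/
def IsSTwoForest (G : SimpleGraph V) (E : Finset (Sym2 V)) : Prop :=
  (E : Set (Sym2 V)) ⊆ G.edgeSet ∧ (SimpleGraph.fromEdgeSet (E : Set (Sym2 V))).IsAcyclic ∧
    Nat.card (SimpleGraph.fromEdgeSet (E : Set (Sym2 V))).ConnectedComponent = 2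

/-- The number of spanning trees of the simple graph `G`. -/
noncomputable def treeCount (G : SimpleGraph V) : ℕ :=
  (Finset.univ.filter (fun E : Finset (Sym2 V) => IsSTree G E)).card



/-- The graph of an edge finset. -/
noncomputable def gr (E : Finset (Sym2 V)) : SimpleGraph V :=
  SimpleGraph.fromEdgeSet ↑E

lemma gr_erase (E : Finset (Sym2 V)) (e : Sym2 V) :
    gr (E.erase e) = gr E \ SimpleGraph.fromEdgeSet {e} := by
  rw [gr, gr, Finset.coe_erase, SimpleGraph.fromEdgeSet_sdiff]

lemma gr_mono {E F : Finset (Sym2 V)} (h : E ⊆ F) : gr E ≤ gr F :=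
  SimpleGraph.fromEdgeSet_mono (by exact_mod_cast h)

lemma walk_sdiff_reach {H : SimpleGraph V} {a b x y : V} (p : H.Walk x y) :
    (H \ fromEdgeSet {s(a,b)}).Reachable x y ∨ (H \ fromEdgeSet {s(a,b)}).Reachable x a ∨
      (H \ fromEdgeSet {s(a,b)}).Reachable x b := by
  induction p with
  | nil => exact Or.inl (Reachable.refl _)
  | @cons x z y h q IH =>
    by_cases hxz : s(x, z) = s(a, b)
    · rw [Sym2.eq_iff] at hxz
      rcases hxz with ⟨rfl, rfl⟩ | ⟨rfl, rfl⟩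
      · exact Or.inr (Or.inl (Reachable.refl _))
      · exact Or.inr (Or.inr (Reachable.refl _))
    · have hadj : (H \ fromEdgeSet {s(a,b)}).Adj x z := by
        rw [SimpleGraph.sdiff_adj]
        exact ⟨h, by simp [SimpleGraph.fromEdgeSet_adj, hxz]⟩
      rcases IH with h1 | h1 | h1
      · exact Or.inl (hadj.reachable.trans h1)
      · exact Or.inr (Or.inl (hadj.reachable.trans h1))
      · exact Or.inr (Or.inr (hadj.reachable.trans h1))

lemma walk_sdiff_reach_of_reach {H : SimpleGraph V} {a b x y : V}
    (hab : (H \ fromEdgeSet {s(a,b)}).Reachable a b) (p : H.Walk x y) :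
    (H \ fromEdgeSet {s(a,b)}).Reachable x y := by
  induction p with
  | nil => exact Reachable.refl _
  | @cons x z y h q IH =>
    refine Reachable.trans ?_ IH
    by_cases hxz : s(x, z) = s(a, b)
    · rw [Sym2.eq_iff] at hxz
      rcases hxz with ⟨rfl, rfl⟩ | ⟨rfl, rfl⟩
      · exact hab
      · exact hab.symm
    · have hadj : (H \ fromEdgeSet {s(a,b)}).Adj x z := by
        rw [SimpleGraph.sdiff_adj]
        exact ⟨h, by simp [SimpleGraph.fromEdgeSet_adj, hxz]⟩
      exact hadj.reachable

/-- In a graph with exactly two connected components, if `u` and `v` are separated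
then every vertex reaches `u` or `v`. -/
lemma two_comp_cover {H : SimpleGraph V}
    (h2 : Nat.card H.ConnectedComponent = 2) {u v : V} (huv : ¬ H.Reachable u v) (z : V) :
    H.Reachable z u ∨ H.Reachable z v := by
  rw [Nat.card_eq_two_iff] at h2
  obtain ⟨x, y, hxy, hcov⟩ := h2
  have hmem : ∀ c : H.ConnectedComponent, c = x ∨ c = y := by
    intro c
    have : c ∈ ({x, y} : Set H.ConnectedComponent) := by rw [hcov]; trivial
    simpa using this
  have huv' : H.connectedComponentMk u ≠ H.connectedComponentMk v := by
    intro h; exact huv (SimpleGraph.ConnectedComponent.exact h)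
  have hz := hmem (H.connectedComponentMk z)
  have hu := hmem (H.connectedComponentMk u)
  have hv := hmem (H.connectedComponentMk v)
  have : H.connectedComponentMk z = H.connectedComponentMk u ∨
      H.connectedComponentMk z = H.connectedComponentMk v := by
    rcases hz with hz | hz <;> rcases hu with hu | hu <;> rcases hv with hv | hv <;>
      simp_all
  rcases this with h | h
  · exact Or.inl (SimpleGraph.ConnectedComponent.exact h)
  · exact Or.inr (SimpleGraph.ConnectedComponent.exact h)

lemma two_comp_of_cover {H : SimpleGraph V} {u v : V} (huv : ¬ H.Reachable u v)
    (hcov : ∀ z, H.Reachable z u ∨ H.Reachable z v) :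
    Nat.card H.ConnectedComponent = 2 := by
  rw [Nat.card_eq_two_iff]
  refine ⟨H.connectedComponentMk u, H.connectedComponentMk v, ?_, ?_⟩
  · intro h; exact huv (SimpleGraph.ConnectedComponent.exact h)
  · ext c
    simp only [Set.mem_insert_iff, Set.mem_singleton_iff, Set.mem_univ, iff_true]
    induction c using SimpleGraph.ConnectedComponent.ind with
    | _ z =>
      rcases hcov z with h | h
      · exact Or.inl (SimpleGraph.ConnectedComponent.sound h.symm).symm
      · exact Or.inr (SimpleGraph.ConnectedComponent.sound h.symm).symm



lemma gr_adj {E : Finset (Sym2 V)} {a b : V} : (gr E).Adj a b ↔ s(a,b) ∈ E ∧ a ≠ b := by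
  rw [gr, SimpleGraph.fromEdgeSet_adj]; simp

variable (G : SimpleGraph V)

lemma tree_erase {T : Finset (Sym2 V)} (hT : IsSTree G T) {u w : V} (he : s(u,w) ∈ T) :
    IsSTwoForest G (T.erase s(u,w)) ∧ ¬ (gr (T.erase s(u,w))).Reachable u w ∧ G.Adj u w := by
  have hadj : G.Adj u w := hT.1 (by exact_mod_cast he)
  have hTadj : (gr T).Adj u w := gr_adj.mpr ⟨he, hadj.ne⟩
  have hbr : (gr T).IsBridge s(u,w) :=
    (SimpleGraph.isAcyclic_iff_forall_adj_isBridge.mp hT.2.1) hTadj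
  have hnr : ¬ (gr (T.erase s(u,w))).Reachable u w := by
    rw [gr_erase]; exact SimpleGraph.isBridge_iff.mp hbr
  have hacy : (gr (T.erase s(u,w))).IsAcyclic := by
    intro x c hc
    exact hT.2.1 (c.mapLe (gr_mono (Finset.erase_subset _ _))) (hc.mapLe _)
  have hcov : ∀ z, (gr (T.erase s(u,w))).Reachable z u ∨ (gr (T.erase s(u,w))).Reachable z w := by
    intro z
    obtain ⟨p⟩ := hT.2.2.preconnected z u
    rw [gr_erase]
    rcases walk_sdiff_reach (a := u) (b := w) p with h | h | h
    · exact Or.inl h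
    · exact Or.inl h
    · exact Or.inr h
  refine ⟨⟨?_, hacy, two_comp_of_cover hnr hcov⟩, hnr, hadj⟩
  · intro f hf
    exact hT.1 (by
      simp only [Finset.coe_erase, Set.mem_diff] at hf
      exact_mod_cast hf.1)

lemma forest_insert {E : Finset (Sym2 V)} (hE : IsSTwoForest G E) {u w : V} (hadj : G.Adj u w)
    (hnr : ¬ (gr E).Reachable w u) :
    IsSTree G (insert s(u,w) E) ∧ s(u,w) ∉ E := by
  have hne : u ≠ w := hadj.ne
  have hmem : s(u,w) ∉ E := by
    intro h
    exact hnr (gr_adj.mpr ⟨h, hne⟩).symm.reachable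
  have hsub : ((insert s(u,w) E : Finset (Sym2 V)) : Set (Sym2 V)) ⊆ G.edgeSet := by
    rw [Finset.coe_insert, Set.insert_subset_iff]
    exact ⟨hadj, hE.1⟩
  have hadj' : (gr (insert s(u,w) E)).Adj u w :=
    gr_adj.mpr ⟨Finset.mem_insert_self _ _, hne⟩
  have hconn : (gr (insert s(u,w) E)).Connected := by
    rw [SimpleGraph.connected_iff_exists_forall_reachable]
    refine ⟨u, fun z => ?_⟩
    have hle : gr E ≤ gr (insert s(u,w) E) := gr_mono (Finset.subset_insert _ _)
    rcases two_comp_cover hE.2.2 (fun h => hnr h.symm) z with h | h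
    · exact (h.mono hle).symm
    · exact ((h.mono hle).trans hadj'.symm.reachable).symm
  have hacy : (gr (insert s(u,w) E)).IsAcyclic := by
    intro x c hc
    by_cases he : s(u,w) ∈ c.edges
    · have hreach := (SimpleGraph.adj_and_reachable_delete_edges_iff_exists_cycle.mpr
        ⟨x, c, hc, he⟩).2
      rw [SimpleGraph.deleteEdges, ← gr_erase, Finset.erase_insert hmem] at hreach
      exact hnr hreach.symm
    · have htr : ∀ f ∈ c.edges, f ∈ (gr E).edgeSet := by
        intro f hf
        have hf1 : f ∈ (gr (insert s(u,w) E)).edgeSet := c.edges_subset_edgeSet hf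
        rw [gr, SimpleGraph.edgeSet_fromEdgeSet] at hf1 ⊢
        refine ⟨?_, hf1.2⟩
        have := hf1.1
        rw [Finset.coe_insert, Set.mem_insert_iff] at this
        rcases this with rfl | h
        · exact absurd hf he
        · exact h
      exact hE.2.1 (c.transfer (gr E) htr) (hc.transfer htr)
  exact ⟨⟨hsub, hacy, hconn⟩, hmem⟩

lemma tree_pointing {T : Finset (Sym2 V)} (hT : IsSTree G T) {u z : V} (hz : z ≠ u) :
    ∃! w : V, s(u,w) ∈ T ∧ ¬ (gr (T.erase s(u,w))).Reachable z u := by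
  obtain ⟨p0⟩ := hT.2.2.preconnected u z
  have hp : p0.bypass.IsPath := SimpleGraph.Walk.bypass_isPath p0
  set p := p0.bypass with hpdef
  clear_value p
  cases p with
  | nil => exact absurd rfl hz
  | @cons _ w _ h q =>
    rw [SimpleGraph.Walk.cons_isPath_iff] at hp
    have hmemT : s(u,w) ∈ T := (gr_adj.mp h).1
    have hbr : ¬ (gr (T.erase s(u,w))).Reachable u w := (tree_erase G hT hmemT).2.1
    -- q avoids u, hence avoids any edge incident to u
    have hqe : ∀ w' : V, s(u,w') ∉ q.edges := by
      intro w' hw'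
      exact hp.2 (q.fst_mem_support_of_mem_edges hw')
    -- q transfers to T minus any edge incident to u
    have hqtr : ∀ w' : V, (gr (T.erase s(u,w'))).Reachable w z := by
      intro w'
      have htr : ∀ f ∈ q.edges, f ∈ (gr (T.erase s(u,w'))).edgeSet := by
        intro f hf
        have hf1 : f ∈ (gr T).edgeSet := q.edges_subset_edgeSet hf
        rw [gr, SimpleGraph.edgeSet_fromEdgeSet] at hf1 ⊢
        refine ⟨?_, hf1.2⟩
        rw [Finset.coe_erase, Set.mem_diff]
        refine ⟨hf1.1, ?_⟩
        intro hfe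
        rw [Set.mem_singleton_iff] at hfe
        subst hfe
        exact hqe w' hf
      exact ⟨q.transfer _ htr⟩
    refine ⟨w, ⟨hmemT, ?_⟩, ?_⟩
    · intro hzu
      exact hbr ((hqtr w).trans hzu).symm
      -- u reach w: from w reach z and z reach u we get w reach u; symm
    · rintro w' ⟨hw'T, hw'nr⟩
      by_contra hne
      apply hw'nr
      -- z reaches u in T minus s(u,w'): z → w → u
      have hww' : s(u,w) ≠ s(u,w') := by
        intro hs
        rw [Sym2.eq_iff] at hs
        rcases hs with ⟨-, h2⟩ | ⟨h1, h2⟩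
        · exact hne h2.symm
        · -- u = w' and w = u
          have : G.Adj u w' := hT.1 (by exact_mod_cast hw'T)
          exact this.ne h1
      have hadjw : (gr (T.erase s(u,w'))).Adj u w := by
        rw [gr_adj]
        exact ⟨Finset.mem_erase.mpr ⟨hww'.symm ∘ Eq.symm, hmemT⟩, (gr_adj.mp h).2⟩
      exact ((hqtr w').symm.trans hadjw.symm.reachable)

lemma exists_tree [DecidableRel G.Adj] (hconn : G.Connected) :
    ∃ T : Finset (Sym2 V), IsSTree G T := by
  classical
  have hne : (Finset.univ.filter (fun E : Finset (Sym2 V) =>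
      (E : Set (Sym2 V)) ⊆ G.edgeSet ∧ (gr E).Connected)).Nonempty := by
    refine ⟨G.edgeFinset, ?_⟩
    rw [Finset.mem_filter]
    refine ⟨Finset.mem_univ _, ?_, ?_⟩
    · rw [SimpleGraph.coe_edgeFinset]
    · rw [gr, SimpleGraph.coe_edgeFinset, SimpleGraph.fromEdgeSet_edgeSet]
      exact hconn
  obtain ⟨E, hE, hmin⟩ := Finset.exists_min_image _ Finset.card hne
  rw [Finset.mem_filter] at hE
  refine ⟨E, hE.2.1, ?_, hE.2.2⟩
  by_contra hcy
  rw [SimpleGraph.IsAcyclic] at hcy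
  push_neg at hcy
  obtain ⟨x, c, hc⟩ := hcy
  have hlen : c.edges ≠ [] := by
    have h3 := hc.three_le_length
    intro h
    rw [← SimpleGraph.Walk.length_edges, h] at h3
    simp at h3
  obtain ⟨e, he⟩ := List.exists_mem_of_ne_nil _ hlen
  revert he
  induction e using Sym2.ind with
  | _ a b =>
    intro he
    have hreach := (SimpleGraph.adj_and_reachable_delete_edges_iff_exists_cycle.mpr
      ⟨x, c, hc, he⟩).2
    have hmemE : s(a,b) ∈ E := by
      have := c.edges_subset_edgeSet he
      rw [SimpleGraph.edgeSet_fromEdgeSet] at this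
      exact_mod_cast this.1
    have hconn' : (gr (E.erase s(a,b))).Connected := by
      rw [gr_erase]
      have hE' := hE.2.2
      rw [SimpleGraph.connected_iff_exists_forall_reachable] at hE'
      obtain ⟨v0, hv0⟩ := hE'
      rw [SimpleGraph.connected_iff_exists_forall_reachable]
      refine ⟨v0, fun y => ?_⟩
      obtain ⟨p⟩ := hv0 y
      exact walk_sdiff_reach_of_reach hreach p
    have : E.card ≤ (E.erase s(a,b)).card := by
      apply hmin
      rw [Finset.mem_filter]
      refine ⟨Finset.mem_univ _, ?_, hconn'⟩
      intro f hf
      exact hE.2.1 (by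
        rw [Finset.coe_erase, Set.mem_diff] at hf
        exact hf.1)
    have := Finset.card_erase_lt_of_mem hmemE
    omega



lemma mp_unique {M G1 G2 : Matrix V V ℝ} (h1 : IsMoorePenrose M G1)
    (h2 : IsMoorePenrose M G2) : G1 = G2 := by
  obtain ⟨a1, b1, c1, d1⟩ := h1
  obtain ⟨a2, b2, c2, d2⟩ := h2
  have e1 : M * G1 = M * G2 := by
    calc M * G1 = (M * G1)ᵀ := c1.symm
    _ = ((M * G2 * M) * G1)ᵀ := by rw [a2]
    _ = ((M * G2) * (M * G1))ᵀ := by rw [mul_assoc (M * G2) M G1]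
    _ = (M * G1)ᵀ * (M * G2)ᵀ := by rw [transpose_mul]
    _ = (M * G1) * (M * G2) := by rw [c1, c2]
    _ = (M * G1 * M) * G2 := by rw [mul_assoc (M * G1) M G2]
    _ = M * G2 := by rw [a1]
  have e2 : G1 * M = G2 * M := by
    calc G1 * M = (G1 * M)ᵀ := d1.symm
    _ = (G1 * (M * G2 * M))ᵀ := by rw [a2]
    _ = ((G1 * M) * (G2 * M))ᵀ := by
          rw [mul_assoc G1 M (G2 * M), mul_assoc M G2 M]
    _ = (G2 * M)ᵀ * (G1 * M)ᵀ := by rw [transpose_mul]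
    _ = (G2 * M) * (G1 * M) := by rw [d1, d2]
    _ = G2 * (M * G1 * M) := by rw [mul_assoc G2 M (G1 * M), mul_assoc M G1 M]
    _ = G2 * M := by rw [a1]
  calc G1 = G1 * M * G1 := b1.symm
  _ = G2 * M * G1 := by rw [e2]
  _ = G2 * (M * G1) := by rw [mul_assoc]
  _ = G2 * (M * G2) := by rw [e1]
  _ = G2 * M * G2 := by rw [← mul_assoc]
  _ = G2 := b2

lemma mp_transpose {M Gm : Matrix V V ℝ} (hM : Mᵀ = M) (h : IsMoorePenrose M Gm) :
    IsMoorePenrose M Gmᵀ := by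
  obtain ⟨a, b, c, d⟩ := h
  refine ⟨?_, ?_, ?_, ?_⟩
  · calc M * Gmᵀ * M = (Mᵀ * (Gmᵀ * Mᵀ)) := by rw [hM, mul_assoc]
    _ = (M * Gm * M)ᵀ := by rw [transpose_mul, transpose_mul]
    _ = M := by rw [a, hM]
  · calc Gmᵀ * M * Gmᵀ = Gmᵀ * (Mᵀ * Gmᵀ) := by rw [hM, mul_assoc]
    _ = (Gm * M * Gm)ᵀ := by rw [transpose_mul, transpose_mul, ← hM]
    _ = Gmᵀ := by rw [b]
  · calc (M * Gmᵀ)ᵀ = Gm * Mᵀ := by rw [transpose_mul, transpose_transpose]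
    _ = (Gm * M) := by rw [hM]
    _ = (Gm * M)ᵀ := d.symm
    _ = Mᵀ * Gmᵀ := by rw [transpose_mul]
    _ = M * Gmᵀ := by rw [hM]
  · calc (Gmᵀ * M)ᵀ = Mᵀ * Gm := by rw [transpose_mul, transpose_transpose]
    _ = (M * Gm) := by rw [hM]
    _ = (M * Gm)ᵀ := c.symm
    _ = Gmᵀ * Mᵀ := by rw [transpose_mul]
    _ = Gmᵀ * M := by rw [hM]

lemma mp_symm {M Gm : Matrix V V ℝ} (hM : Mᵀ = M) (h : IsMoorePenrose M Gm) : Gmᵀ = Gm :=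
  mp_unique (mp_transpose hM h) h

/-- The all-ones matrix. -/
noncomputable def Jm : Matrix V V ℝ := Matrix.of fun _ _ => 1

lemma Jm_transpose : (Jm : Matrix V V ℝ)ᵀ = Jm := by
  ext i j; rfl

lemma assemble {L F : Matrix V V ℝ} (hLs : Lᵀ = L) (hFs : Fᵀ = F)
    (hLJ : L * Jm = 0) (hFJ : F * Jm = 0)
    (hLF : L * F = 1 - (Fintype.card V : ℝ)⁻¹ • Jm) : IsMoorePenrose L F := by
  set n : ℝ := (Fintype.card V : ℝ)
  have hJL : Jm * L = 0 := by
    calc Jm * L = (Lᵀ * Jmᵀ)ᵀ := by rw [transpose_mul, transpose_transpose, transpose_transpose]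
    _ = (L * Jm)ᵀ := by rw [hLs, Jm_transpose]
    _ = 0 := by rw [hLJ]; exact Matrix.transpose_zero
  have hJF : Jm * F = 0 := by
    calc Jm * F = (Fᵀ * Jmᵀ)ᵀ := by rw [transpose_mul, transpose_transpose, transpose_transpose]
    _ = (F * Jm)ᵀ := by rw [hFs, Jm_transpose]
    _ = 0 := by rw [hFJ]; exact Matrix.transpose_zero
  have hRHSsymm : (1 - n⁻¹ • Jm : Matrix V V ℝ)ᵀ = 1 - n⁻¹ • Jm := by
    rw [transpose_sub, transpose_smul, Jm_transpose, transpose_one]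
  have hFL : F * L = 1 - n⁻¹ • Jm := by
    calc F * L = (Lᵀ * Fᵀ)ᵀ := by rw [transpose_mul, transpose_transpose, transpose_transpose]
    _ = (L * F)ᵀ := by rw [hLs, hFs]
    _ = 1 - n⁻¹ • Jm := by rw [hLF, hRHSsymm]
  refine ⟨?_, ?_, ?_, ?_⟩
  · calc L * F * L = (1 - n⁻¹ • Jm) * L := by rw [hLF]
    _ = L - n⁻¹ • (Jm * L) := by rw [sub_mul, one_mul, smul_mul_assoc]
    _ = L := by rw [hJL, smul_zero, sub_zero]
  · calc F * L * F = (1 - n⁻¹ • Jm) * F := by rw [hFL]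
    _ = F - n⁻¹ • (Jm * F) := by rw [sub_mul, one_mul, smul_mul_assoc]
    _ = F := by rw [hJF, smul_zero, sub_zero]
  · rw [hLF, hRHSsymm]
  · rw [hFL, hRHSsymm]



/-! ### Component counting functions -/

noncomputable def cS (E : Finset (Sym2 V)) (v : V) : ℕ :=
  (Finset.univ.filter fun z => (gr E).Reachable z v).card

noncomputable def cC (E : Finset (Sym2 V)) (v : V) : ℕ :=
  (Finset.univ.filter fun z => ¬ (gr E).Reachable z v).card

lemma cS_add_cC (E : Finset (Sym2 V)) (v : V) : cS E v + cC E v = Fintype.card V := by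
  rw [cS, cC]
  rw [Finset.card_filter_add_card_filter_not]
  exact Finset.card_univ

lemma cS_congr {E : Finset (Sym2 V)} {u v : V} (h : (gr E).Reachable u v) :
    cS E u = cS E v := by
  unfold cS; congr 1
  apply Finset.filter_congr
  intro z _
  exact ⟨fun hz => hz.trans h, fun hz => hz.trans h.symm⟩

lemma cC_congr {E : Finset (Sym2 V)} {u v : V} (h : (gr E).Reachable u v) :
    cC E u = cC E v := by
  unfold cC; congr 1
  apply Finset.filter_congr
  intro z _
  exact not_congr ⟨fun hz => hz.trans h, fun hz => hz.trans h.symm⟩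

lemma forest_cover {G : SimpleGraph V} {E : Finset (Sym2 V)} (hE : IsSTwoForest G E)
    {u v : V} (h : ¬ (gr E).Reachable u v) (z : V) :
    (gr E).Reachable z u ∨ (gr E).Reachable z v :=
  two_comp_cover hE.2.2 h z

lemma cS_eq_cC {G : SimpleGraph V} {E : Finset (Sym2 V)} (hE : IsSTwoForest G E)
    {u v : V} (h : ¬ (gr E).Reachable u v) : cS E u = cC E v := by
  unfold cS cC; congr 1
  apply Finset.filter_congr
  intro z _
  constructor
  · intro hz hc
    exact h (hz.symm.trans hc)
  · intro hz
    rcases forest_cover hE h z with h1 | h1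
    · exact h1
    · exact absurd h1 hz

lemma card_reach_from (E : Finset (Sym2 V)) (u : V) :
    (Finset.univ.filter fun v => (gr E).Reachable u v).card = cS E u := by
  unfold cS; congr 1
  apply Finset.filter_congr
  intro z _
  exact ⟨Reachable.symm, Reachable.symm⟩

lemma card_nreach_from (E : Finset (Sym2 V)) (u : V) :
    (Finset.univ.filter fun v => ¬ (gr E).Reachable u v).card = cC E u := by
  unfold cC; congr 1
  apply Finset.filter_congr
  intro z _
  exact not_congr ⟨Reachable.symm, Reachable.symm⟩

/-! ### The per-forest summands -/

noncomputable def phi (E : Finset (Sym2 V)) (u v : V) : ℝ :=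
  if (gr E).Reachable u v then ((cC E u : ℝ))^2 else -((cS E u : ℝ) * (cS E v : ℝ))

noncomputable def psi (E : Finset (Sym2 V)) (u v : V) : ℝ :=
  if (gr E).Reachable u v then (cC E u : ℝ) else -(cS E u : ℝ)

lemma phi_symm {G : SimpleGraph V} {E : Finset (Sym2 V)} (hE : IsSTwoForest G E) (u v : V) :
    phi E u v = phi E v u := by
  unfold phi
  by_cases h : (gr E).Reachable u v
  · rw [if_pos h, if_pos h.symm, cC_congr h]
  · rw [if_neg h, if_neg (fun h' => h h'.symm)]
    ring

lemma phi_rowsum {G : SimpleGraph V} {E : Finset (Sym2 V)} (hE : IsSTwoForest G E) (u : V) :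
    ∑ v, phi E u v = 0 := by
  rw [← Finset.sum_filter_add_sum_filter_not Finset.univ (fun v => (gr E).Reachable u v)]
  have e1 : ∀ v ∈ Finset.univ.filter (fun v => (gr E).Reachable u v),
      phi E u v = (cC E u : ℝ)^2 := by
    intro v hv
    rw [Finset.mem_filter] at hv
    rw [phi, if_pos hv.2]
  have e2 : ∀ v ∈ Finset.univ.filter (fun v => ¬(gr E).Reachable u v),
      phi E u v = -((cS E u : ℝ) * (cC E u : ℝ)) := by
    intro v hv
    rw [Finset.mem_filter] at hv
    rw [phi, if_neg hv.2, cS_eq_cC hE (fun h' => hv.2 h'.symm)]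
  rw [Finset.sum_congr rfl e1, Finset.sum_congr rfl e2, Finset.sum_const, Finset.sum_const,
    nsmul_eq_mul, nsmul_eq_mul, card_reach_from, card_nreach_from]
  ring

/-! ### The Laplacian interchange identity -/

lemma lap_apply (G : SimpleGraph V) [DecidableRel G.Adj] (u w : V) :
    G.lapMatrix ℝ u w = (if u = w then (G.degree u : ℝ) else 0) -
      (if G.Adj u w then 1 else 0) := by
  simp [SimpleGraph.lapMatrix, SimpleGraph.degMatrix, SimpleGraph.adjMatrix,
    Matrix.diagonal]

lemma lap_phi {G : SimpleGraph V} [DecidableRel G.Adj] {E : Finset (Sym2 V)}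
    (hE : IsSTwoForest G E) (u v : V) :
    ∑ w, G.lapMatrix ℝ u w * phi E w v
      = (Fintype.card V : ℝ) * psi E u v *
        ((Finset.univ.filter fun w => G.Adj u w ∧ ¬ (gr E).Reachable w u).card : ℝ) := by
  have hsplit : ∑ w, G.lapMatrix ℝ u w * phi E w v
      = (G.degree u : ℝ) * phi E u v -
        ∑ w ∈ Finset.univ.filter (fun w => G.Adj u w), phi E w v := by
    rw [Finset.sum_congr rfl (fun w _ => by rw [lap_apply, sub_mul])]
    rw [Finset.sum_sub_distrib]
    congr 1
    · rw [Finset.sum_congr rfl (fun w _ => ?_), Finset.sum_ite_eq Finset.univ u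
        (fun w => (G.degree u : ℝ) * phi E w v)]
      · rw [if_pos (Finset.mem_univ u)]
      · by_cases h : u = w <;> simp [h]
    · rw [Finset.sum_filter]
      exact Finset.sum_congr rfl (fun w _ => by by_cases h : G.Adj u w <;> simp [h])
  -- split neighbors by reachability to v
  set aIn := (Finset.univ.filter fun w => G.Adj u w ∧ (gr E).Reachable w v).card with haIn
  set aOut := (Finset.univ.filter fun w => G.Adj u w ∧ ¬ (gr E).Reachable w v).card with haOut
  have hdeg : G.degree u = aIn + aOut := by
    rw [haIn, haOut, ← Finset.filter_filter, ← Finset.filter_filter,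
      Finset.card_filter_add_card_filter_not]
    rw [← SimpleGraph.neighborFinset_eq_filter, SimpleGraph.degree]
  have hnbr : ∑ w ∈ Finset.univ.filter (fun w => G.Adj u w), phi E w v
      = (aIn : ℝ) * (cC E v : ℝ)^2 + (aOut : ℝ) * (-((cC E v : ℝ) * (cS E v : ℝ))) := by
    rw [← Finset.sum_filter_add_sum_filter_not (Finset.univ.filter fun w => G.Adj u w)
      (fun w => (gr E).Reachable w v)]
    have e1 : ∀ w ∈ (Finset.univ.filter fun w => G.Adj u w).filter
        (fun w => (gr E).Reachable w v), phi E w v = (cC E v : ℝ)^2 := by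
      intro w hw
      rw [Finset.mem_filter] at hw
      rw [phi, if_pos hw.2, cC_congr hw.2]
    have e2 : ∀ w ∈ (Finset.univ.filter fun w => G.Adj u w).filter
        (fun w => ¬ (gr E).Reachable w v), phi E w v = -((cC E v : ℝ) * (cS E v : ℝ)) := by
      intro w hw
      rw [Finset.mem_filter] at hw
      rw [phi, if_neg hw.2, cS_eq_cC hE hw.2]
    congr 1
    · rw [Finset.sum_congr rfl e1, Finset.sum_const, nsmul_eq_mul, haIn, Finset.filter_filter]
    · rw [Finset.sum_congr rfl e2, Finset.sum_const, nsmul_eq_mul, haOut, Finset.filter_filter]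
  have hn : (cS E v : ℝ) + (cC E v : ℝ) = (Fintype.card V : ℝ) := by
    exact_mod_cast cS_add_cC E v
  rw [hsplit, hnbr]
  by_cases h : (gr E).Reachable u v
  · have hcrd : (Finset.univ.filter fun w => G.Adj u w ∧ ¬ (gr E).Reachable w u).card = aOut := by
      rw [haOut]; congr 1
      apply Finset.filter_congr
      intro w _
      exact and_congr_right (fun _ => not_congr ⟨fun h' => h'.trans h, fun h' => h'.trans h.symm⟩)
    rw [hcrd, phi, if_pos h, psi, if_pos h, cC_congr h]
    rw [show (G.degree u : ℝ) = (aIn : ℝ) + aOut from by exact_mod_cast hdeg, ← hn]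
    ring
  · have hcrd : (Finset.univ.filter fun w => G.Adj u w ∧ ¬ (gr E).Reachable w u).card = aIn := by
      rw [haIn]; congr 1
      apply Finset.filter_congr
      intro w _
      refine and_congr_right (fun _ => ⟨fun h' => ?_, fun h' h'' => h (h''.symm.trans h')⟩)
      rcases forest_cover hE h w with h1 | h1
      · exact absurd h1 h'
      · exact h1
    rw [hcrd, phi, if_neg h, psi, if_neg h, cS_eq_cC hE h]
    rw [show (G.degree u : ℝ) = (aIn : ℝ) + aOut from by exact_mod_cast hdeg, ← hn]
    ring

/-! ### Per-tree counting -/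

lemma countA (G : SimpleGraph V) {T : Finset (Sym2 V)} (hT : IsSTree G T) (u v : V) :
    ((Finset.univ.filter fun w => s(u,w) ∈ T ∧
      ¬ (gr (T.erase s(u,w))).Reachable v u)).card = if v = u then 0 else 1 := by
  split_ifs with h
  · subst h
    rw [Finset.card_eq_zero, Finset.filter_eq_empty_iff]
    rintro w - ⟨-, hnr⟩
    exact hnr (Reachable.refl v)
  · obtain ⟨w₀, hw₀, huniq⟩ := tree_pointing G hT h
    rw [Finset.card_eq_one]
    refine ⟨w₀, ?_⟩
    rw [Finset.eq_singleton_iff_unique_mem]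
    exact ⟨Finset.mem_filter.mpr ⟨Finset.mem_univ _, hw₀⟩,
      fun w hw => huniq w (Finset.mem_filter.mp hw).2⟩

lemma sum_cC_tree (G : SimpleGraph V) {T : Finset (Sym2 V)} (hT : IsSTree G T) (u : V) :
    ∑ w ∈ Finset.univ.filter (fun w => s(u,w) ∈ T), cC (T.erase s(u,w)) u
      = Fintype.card V - 1 := by
  calc ∑ w ∈ Finset.univ.filter (fun w => s(u,w) ∈ T), cC (T.erase s(u,w)) u
      = ∑ w ∈ Finset.univ.filter (fun w => s(u,w) ∈ T),
          ∑ z, ite (¬ (gr (T.erase s(u,w))).Reachable z u) 1 0 := by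
        refine Finset.sum_congr rfl (fun w _ => ?_)
        rw [cC, Finset.card_filter]
    _ = ∑ z, ∑ w ∈ Finset.univ.filter (fun w => s(u,w) ∈ T),
          ite (¬ (gr (T.erase s(u,w))).Reachable z u) 1 0 := Finset.sum_comm
    _ = ∑ z : V, ite (z = u) 0 1 := by
        refine Finset.sum_congr rfl (fun z _ => ?_)
        rw [← Finset.card_filter, Finset.filter_filter, countA G hT u z]
    _ = Fintype.card V - 1 := by
        have : ∀ z : V, (if z = u then 0 else 1) = if z ≠ u then 1 else 0 := by
          intro z; by_cases h : z = u <;> simp [h]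
        rw [Finset.sum_congr rfl (fun z _ => this z), ← Finset.card_filter,
          Finset.filter_ne', Finset.card_erase_of_mem (Finset.mem_univ u), Finset.card_univ]

lemma psi_eq (E : Finset (Sym2 V)) (u v : V) :
    psi E u v = (Fintype.card V : ℝ) * (if (gr E).Reachable u v then 1 else 0)
      - (cS E u : ℝ) := by
  have hn : (cS E u : ℝ) + (cC E u : ℝ) = (Fintype.card V : ℝ) := by
    exact_mod_cast cS_add_cC E u
  rw [psi]
  split_ifs with h
  · linarith
  · ring

lemma tree_sum (G : SimpleGraph V) {T : Finset (Sym2 V)} (hT : IsSTree G T) (u v : V) :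
    ∑ w ∈ Finset.univ.filter (fun w => s(u,w) ∈ T), psi (T.erase s(u,w)) u v
      = (Fintype.card V : ℝ) * (if u = v then 1 else 0) - 1 := by
  classical
  set n : ℝ := (Fintype.card V : ℝ) with hn
  set D := Finset.univ.filter (fun w : V => s(u,w) ∈ T) with hD
  have hpos : 1 ≤ Fintype.card V := Fintype.card_pos_iff.mpr ⟨u⟩
  have h1 : ∑ w ∈ D, psi (T.erase s(u,w)) u v
      = n * ((D.filter fun w => (gr (T.erase s(u,w))).Reachable u v).card : ℝ)
        - ∑ w ∈ D, (cS (T.erase s(u,w)) u : ℝ) := by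
    rw [Finset.sum_congr rfl (fun w _ => psi_eq (T.erase s(u,w)) u v),
      Finset.sum_sub_distrib, ← Finset.mul_sum]
    congr 2
    rw [Finset.card_filter]
    push_cast
    rfl
  have hc1 : (D.filter fun w => (gr (T.erase s(u,w))).Reachable u v).card
      + (D.filter fun w => ¬ (gr (T.erase s(u,w))).Reachable u v).card = D.card :=
    Finset.card_filter_add_card_filter_not _
  have hc2 : (D.filter fun w => ¬ (gr (T.erase s(u,w))).Reachable u v).card
      = if v = u then 0 else 1 := by
    rw [hD, Finset.filter_filter, ← countA G hT u v]
    congr 1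
    apply Finset.filter_congr
    intro w _
    rw [SimpleGraph.reachable_comm]
  have hc3 : ∑ w ∈ D, (cS (T.erase s(u,w)) u : ℝ) = (D.card : ℝ) * n - (n - 1) := by
    have e1 : ∀ w ∈ D, (cS (T.erase s(u,w)) u : ℝ) = n - (cC (T.erase s(u,w)) u : ℝ) := by
      intro w _
      have h' : ((cS (T.erase s(u,w)) u : ℝ)) + (cC (T.erase s(u,w)) u : ℝ)
          = (Fintype.card V : ℝ) := by exact_mod_cast cS_add_cC (T.erase s(u,w)) u
      rw [hn]; linarith
    rw [Finset.sum_congr rfl e1, Finset.sum_sub_distrib, Finset.sum_const, nsmul_eq_mul]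
    have e2 : ∑ w ∈ D, (cC (T.erase s(u,w)) u : ℝ) = n - 1 := by
      have h := sum_cC_tree G hT u
      rw [← hD] at h
      have h2 : ((Fintype.card V - 1 : ℕ) : ℝ) = n - 1 := by
        rw [hn]; push_cast [Nat.cast_sub hpos]; ring
      rw [← h2, ← h]
      exact (Nat.cast_sum _ _).symm
    rw [e2]
  rw [h1, hc3]
  by_cases huv : u = v
  · subst huv
    have : (D.filter fun w => ¬ (gr (T.erase s(u,w))).Reachable u u).card = 0 := by
      rw [hc2, if_pos rfl]
    have hfull : ((D.filter fun w => (gr (T.erase s(u,w))).Reachable u u).card : ℝ)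
        = (D.card : ℝ) := by
      exact_mod_cast congrArg (Nat.cast (R := ℝ)) (by omega : (D.filter fun w =>
        (gr (T.erase s(u,w))).Reachable u u).card = D.card)
    rw [hfull, if_pos rfl]
    ring
  · have hone : ((D.filter fun w => (gr (T.erase s(u,w))).Reachable u v).card : ℝ)
        = (D.card : ℝ) - 1 := by
      have h2' : (D.filter fun w => ¬ (gr (T.erase s(u,w))).Reachable u v).card = 1 := by
        rw [hc2, if_neg (fun h => huv h.symm)]
      have := hc1
      rw [h2'] at this
      have : ((D.filter fun w => (gr (T.erase s(u,w))).Reachable u v).card : ℝ) + 1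
          = (D.card : ℝ) := by exact_mod_cast this
      linarith
    rw [hone, if_neg huv]
    ring

/-! ### The bijection between (2-forest, crossing edge at u) pairs and (tree, edge at u) pairs -/

lemma forest_tree_sum (G : SimpleGraph V) [DecidableRel G.Adj] (u v : V) :
    ∑ E ∈ Finset.univ.filter (fun E : Finset (Sym2 V) => IsSTwoForest G E),
      ∑ w ∈ Finset.univ.filter (fun w => G.Adj u w ∧ ¬ (gr E).Reachable w u), psi E u v
    = ∑ T ∈ Finset.univ.filter (fun T : Finset (Sym2 V) => IsSTree G T),
      ∑ w ∈ Finset.univ.filter (fun w => s(u,w) ∈ T), psi (T.erase s(u,w)) u v := by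
  classical
  rw [Finset.sum_sigma', Finset.sum_sigma']
  refine Finset.sum_nbij' (fun p => ⟨insert s(u, p.2) p.1, p.2⟩)
    (fun p => ⟨p.1.erase s(u, p.2), p.2⟩) ?_ ?_ ?_ ?_ ?_
  · rintro ⟨E, w⟩ hp
    rw [Finset.mem_sigma, Finset.mem_filter, Finset.mem_filter] at hp
    obtain ⟨⟨-, hE⟩, -, hadj, hnr⟩ := hp
    obtain ⟨hT, -⟩ := forest_insert G hE hadj hnr
    rw [Finset.mem_sigma, Finset.mem_filter, Finset.mem_filter]
    exact ⟨⟨Finset.mem_univ _, hT⟩, Finset.mem_univ _, Finset.mem_insert_self _ _⟩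
  · rintro ⟨T, w⟩ hp
    rw [Finset.mem_sigma, Finset.mem_filter, Finset.mem_filter] at hp
    obtain ⟨⟨-, hT⟩, -, he⟩ := hp
    obtain ⟨hF, hnr, hadj⟩ := tree_erase G hT he
    rw [Finset.mem_sigma, Finset.mem_filter, Finset.mem_filter]
    exact ⟨⟨Finset.mem_univ _, hF⟩, Finset.mem_univ _, hadj,
      fun h => hnr h.symm⟩
  · rintro ⟨E, w⟩ hp
    rw [Finset.mem_sigma, Finset.mem_filter, Finset.mem_filter] at hp
    obtain ⟨⟨-, hE⟩, -, hadj, hnr⟩ := hp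
    obtain ⟨-, hmem⟩ := forest_insert G hE hadj hnr
    simp only [Finset.erase_insert hmem]
  · rintro ⟨T, w⟩ hp
    rw [Finset.mem_sigma, Finset.mem_filter, Finset.mem_filter] at hp
    obtain ⟨⟨-, hT⟩, -, he⟩ := hp
    simp only [Finset.insert_erase he]
  · rintro ⟨E, w⟩ hp
    rw [Finset.mem_sigma, Finset.mem_filter, Finset.mem_filter] at hp
    obtain ⟨⟨-, hE⟩, -, hadj, hnr⟩ := hp
    obtain ⟨-, hmem⟩ := forest_insert G hE hadj hnr
    simp only [Finset.erase_insert hmem]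

/-! ### The forest sum `N` and the Laplacian identity -/

noncomputable def Nf (G : SimpleGraph V) (u v : V) : ℝ :=
  ∑ E ∈ Finset.univ.filter (fun E : Finset (Sym2 V) => IsSTwoForest G E), phi E u v

lemma Nf_symm (G : SimpleGraph V) (u v : V) : Nf G u v = Nf G v u := by
  unfold Nf
  refine Finset.sum_congr rfl (fun E hE => ?_)
  rw [Finset.mem_filter] at hE
  exact phi_symm hE.2 u v

lemma Nf_rowsum (G : SimpleGraph V) (u : V) : ∑ v, Nf G u v = 0 := by
  unfold Nf
  rw [Finset.sum_comm]
  refine Finset.sum_eq_zero (fun E hE => ?_)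
  rw [Finset.mem_filter] at hE
  exact phi_rowsum hE.2 u

lemma lap_Nf (G : SimpleGraph V) [DecidableRel G.Adj] (u v : V) :
    ∑ w, G.lapMatrix ℝ u w * Nf G w v
      = (Fintype.card V : ℝ) *
        ((Finset.univ.filter (fun T : Finset (Sym2 V) => IsSTree G T)).card : ℝ) *
        ((Fintype.card V : ℝ) * (if u = v then 1 else 0) - 1) := by
  have h0 : ∑ w, G.lapMatrix ℝ u w * Nf G w v
      = ∑ E ∈ Finset.univ.filter (fun E : Finset (Sym2 V) => IsSTwoForest G E),
          ∑ w, G.lapMatrix ℝ u w * phi E w v := by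
    rw [Finset.sum_comm]
    refine Finset.sum_congr rfl (fun w _ => ?_)
    rw [Nf, Finset.mul_sum]
  rw [h0]
  have h1 : ∀ E ∈ Finset.univ.filter (fun E : Finset (Sym2 V) => IsSTwoForest G E),
      ∑ w, G.lapMatrix ℝ u w * phi E w v
        = (Fintype.card V : ℝ) *
            ∑ w ∈ Finset.univ.filter (fun w => G.Adj u w ∧ ¬ (gr E).Reachable w u), psi E u v := by
    intro E hE
    rw [Finset.mem_filter] at hE
    rw [lap_phi hE.2 u v, Finset.sum_const, nsmul_eq_mul]
    ring
  rw [Finset.sum_congr rfl h1, ← Finset.mul_sum, forest_tree_sum G u v]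
  have h2 : ∀ T ∈ Finset.univ.filter (fun T : Finset (Sym2 V) => IsSTree G T),
      ∑ w ∈ Finset.univ.filter (fun w => s(u,w) ∈ T), psi (T.erase s(u,w)) u v
        = (Fintype.card V : ℝ) * (if u = v then 1 else 0) - 1 := by
    intro T hT
    rw [Finset.mem_filter] at hT
    exact tree_sum G hT.2 u v
  rw [Finset.sum_congr rfl h2, Finset.sum_const, nsmul_eq_mul]
  ring


lemma lap_rowsum (G : SimpleGraph V) [DecidableRel G.Adj] (u : V) :
    ∑ w, G.lapMatrix ℝ u w = 0 := by
  have h := congrFun (SimpleGraph.lapMatrix_mulVec_const_eq_zero (R := ℝ) (G := G)) u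
  simpa [Matrix.mulVec, dotProduct] using h

lemma Nf_eq (G : SimpleGraph V) (u v : V) :
    Nf G u v =
      (∑ E ∈ Finset.univ.filter (fun E : Finset (Sym2 V) =>
            IsSTwoForest G E ∧ (SimpleGraph.fromEdgeSet (E : Set (Sym2 V))).Reachable u v),
          ((Finset.univ.filter (fun z : V =>
              ¬ (SimpleGraph.fromEdgeSet (E : Set (Sym2 V))).Reachable z u)).card : ℝ) ^ 2)
       - (∑ E ∈ Finset.univ.filter (fun E : Finset (Sym2 V) =>
            IsSTwoForest G E ∧ ¬ (SimpleGraph.fromEdgeSet (E : Set (Sym2 V))).Reachable u v),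
          ((Finset.univ.filter (fun z : V =>
              (SimpleGraph.fromEdgeSet (E : Set (Sym2 V))).Reachable z u)).card : ℝ) *
          ((Finset.univ.filter (fun z : V =>
              (SimpleGraph.fromEdgeSet (E : Set (Sym2 V))).Reachable z v)).card : ℝ)) := by
  rw [Nf, ← Finset.sum_filter_add_sum_filter_not
    (Finset.univ.filter (fun E : Finset (Sym2 V) => IsSTwoForest G E))
    (fun E => (gr E).Reachable u v), Finset.filter_filter, Finset.filter_filter]
  rw [sub_eq_add_neg, ← Finset.sum_neg_distrib]
  congr 1
  · refine Finset.sum_congr (by ext; rw [Finset.mem_filter, Finset.mem_filter]; rfl) (fun E hE => ?_)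
    rw [Finset.mem_filter] at hE
    have h : (gr E).Reachable u v := hE.2.2
    rw [phi, if_pos h, cC, gr]
    congr 2
    congr 1; ext; simp
  · refine Finset.sum_congr (by ext; rw [Finset.mem_filter, Finset.mem_filter]; rfl) (fun E hE => ?_)
    rw [Finset.mem_filter] at hE
    have h : ¬ (gr E).Reachable u v := hE.2.2
    rw [phi, if_neg h, cS, cS, gr]
    congr 3 <;> congr 1 <;> ext <;> simp

/-- **Forest formula for the combinatorial Green's function of a connected simple graph.**
`Gc` is the Moore–Penrose pseudoinverse of the combinatorial Laplacian `L = D - A`.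
The first sum ranges over spanning 2-forests whose component `T₁` contains both `u`
and `v` (its square counts `|T₂|²`), the second over spanning 2-forests separating
`u` from `v` (counting `|T₁|·|T₂|`). -/
theorem combinatorial_green_forest_formula_simple
    {V : Type*} [Fintype V] [DecidableEq V]
    (G : SimpleGraph V) [DecidableRel G.Adj] (hconn : G.Connected)
    (Gc : Matrix V V ℝ) (hGc : IsMoorePenrose (G.lapMatrix ℝ) Gc) (u v : V) :
    Gc u v = (1 / ((Fintype.card V : ℝ) ^ 2 * (treeCount G : ℝ))) *
      ((∑ E ∈ Finset.univ.filter (fun E : Finset (Sym2 V) =>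
            IsSTwoForest G E ∧ (SimpleGraph.fromEdgeSet (E : Set (Sym2 V))).Reachable u v),
          ((Finset.univ.filter (fun z : V =>
              ¬ (SimpleGraph.fromEdgeSet (E : Set (Sym2 V))).Reachable z u)).card : ℝ) ^ 2)
       - (∑ E ∈ Finset.univ.filter (fun E : Finset (Sym2 V) =>
            IsSTwoForest G E ∧ ¬ (SimpleGraph.fromEdgeSet (E : Set (Sym2 V))).Reachable u v),
          ((Finset.univ.filter (fun z : V =>
              (SimpleGraph.fromEdgeSet (E : Set (Sym2 V))).Reachable z u)).card : ℝ) *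
          ((Finset.univ.filter (fun z : V =>
              (SimpleGraph.fromEdgeSet (E : Set (Sym2 V))).Reachable z v)).card : ℝ))) := by
  classical
  have hnon : Nonempty V := hconn.nonempty
  have hn0 : (Fintype.card V : ℝ) ≠ 0 := by
    have : 0 < Fintype.card V := Fintype.card_pos_iff.mpr hnon
    exact Nat.cast_ne_zero.mpr this.ne'
  have hτpos : 0 < treeCount G := by
    obtain ⟨T, hT⟩ := exists_tree G hconn
    rw [treeCount]
    exact Finset.card_pos.mpr ⟨T, Finset.mem_filter.mpr ⟨Finset.mem_univ _, hT⟩⟩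
  have hτ0 : ((treeCount G : ℝ)) ≠ 0 := Nat.cast_ne_zero.mpr hτpos.ne'
  set Fm : Matrix V V ℝ := Matrix.of (fun a b =>
    (1 / ((Fintype.card V : ℝ)^2 * (treeCount G : ℝ))) * Nf G a b) with hFm
  have hMP : IsMoorePenrose (G.lapMatrix ℝ) Fm := by
    apply assemble
    · exact G.isSymm_lapMatrix (R := ℝ)
    · ext a b
      show (1 / _) * Nf G b a = (1 / _) * Nf G a b
      rw [Nf_symm]
    · ext a b
      rw [Matrix.mul_apply]
      have e : ∀ w, G.lapMatrix ℝ a w * Jm w b = G.lapMatrix ℝ a w := fun w => mul_one _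
      rw [Finset.sum_congr rfl (fun w _ => e w), lap_rowsum]
      rfl
    · ext a b
      rw [Matrix.mul_apply]
      have e : ∀ w, Fm a w * Jm w b
          = (1 / ((Fintype.card V : ℝ)^2 * (treeCount G : ℝ))) * Nf G a w :=
        fun w => mul_one _
      rw [Finset.sum_congr rfl (fun w _ => e w), ← Finset.mul_sum, Nf_rowsum, mul_zero]
      rfl
    · ext a b
      rw [Matrix.mul_apply]
      have e : ∀ w, G.lapMatrix ℝ a w * Fm w b
          = (1 / ((Fintype.card V : ℝ)^2 * (treeCount G : ℝ))) *
              (G.lapMatrix ℝ a w * Nf G w b) := by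
        intro w
        show G.lapMatrix ℝ a w * ((1 / ((Fintype.card V : ℝ)^2 * (treeCount G : ℝ))) *
          Nf G w b) = _
        ring
      rw [Finset.sum_congr rfl (fun w _ => e w), ← Finset.mul_sum, lap_Nf]
      have hτeq : ((Finset.univ.filter (fun T : Finset (Sym2 V) => IsSTree G T)).card : ℝ)
          = (treeCount G : ℝ) := by rw [treeCount]
      rw [hτeq, Matrix.sub_apply, Matrix.smul_apply, Matrix.one_apply]
      show _ = _ - (Fintype.card V : ℝ)⁻¹ * 1
      field_simp
  have hGF : Gc = Fm := mp_unique hGc hMP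
  rw [hGF]
  show (1 / ((Fintype.card V : ℝ)^2 * (treeCount G : ℝ))) * Nf G u v = _
  rw [Nf_eq]

end Paper
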